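/- For the function ξ defined on [1/2, 1] by ξ(γ) = 2 − log₂ γ − (1/γ)·Σ_{k≥1} k·ε_k/2^k (binary digits with infinitely many zeros), the left limit at 1 satisfies lim_{γ→1⁻} ξ(γ) = 0. -/
import Mathlib


open Filter

set_option maxHeartbeats 1000000

/-- The `k`-th binary digit of `x` (for `k ≥ 1`), via the floor expansion; this is the
expansion with infinitely many zero digits. -/
noncomputable def binDigit (x : ℝ) (k : ℕ) : ℤ :=
  ⌊2 ^ k * x⌋ - 2 * ⌊2 ^ (k - 1) * x⌋

/-- `ξ(γ) = 2 − log₂ γ − (1/γ) Σ_{k≥1} k ε_k 2^{-k}`. -/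
noncomputable def xiSteinhaus (γ : ℝ) : ℝ :=
  2 - Real.logb 2 γ - (1 / γ) * ∑' k : ℕ, ((k + 1 : ℕ) : ℝ) * (binDigit γ (k + 1) : ℝ) / 2 ^ (k + 1)

lemma binDigit_succ (x : ℝ) (k : ℕ) :
    binDigit x (k + 1) = ⌊2 * (2 ^ k * x)⌋ - 2 * ⌊2 ^ k * x⌋ := by
  simp [binDigit, pow_succ, mul_comm, mul_assoc, mul_left_comm]

lemma binDigit_nonneg (x : ℝ) (k : ℕ) : (0 : ℤ) ≤ binDigit x (k + 1) := by
  rw [binDigit_succ]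
  have h : (2 : ℝ) * ⌊2 ^ k * x⌋ ≤ 2 * (2 ^ k * x) := by
    have := Int.floor_le (2 ^ k * x); linarith
  have : (2 : ℤ) * ⌊2 ^ k * x⌋ ≤ ⌊2 * (2 ^ k * x)⌋ := Int.le_floor.2 (by push_cast; linarith)
  omega

lemma binDigit_le_one (x : ℝ) (k : ℕ) : binDigit x (k + 1) ≤ 1 := by
  rw [binDigit_succ]
  have h := Int.lt_floor_add_one (2 ^ k * x)
  have : ⌊2 * (2 ^ k * x)⌋ < 2 * ⌊2 ^ k * x⌋ + 2 := by
    rw [Int.floor_lt]; push_cast; linarith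
  omega

lemma floor_pow_mul {γ : ℝ} {n k : ℕ} (h1 : 1 - 1 / 2 ^ n ≤ γ) (h2 : γ < 1) (hk : k ≤ n) :
    ⌊(2 : ℝ) ^ k * γ⌋ = 2 ^ k - 1 := by
  have hpow : (2 : ℝ) ^ k ≤ 2 ^ n := pow_le_pow_right₀ (by norm_num) hk
  have hkpos : (0 : ℝ) < 2 ^ k := by positivity
  have hnpos : (0 : ℝ) < 2 ^ n := by positivity
  have hdiv : (2 : ℝ) ^ k * (1 / 2 ^ n) ≤ 1 := by
    rw [mul_one_div, div_le_one hnpos]; exact hpow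
  have hmul : (2 : ℝ) ^ k * (1 - 1 / 2 ^ n) ≤ 2 ^ k * γ :=
    mul_le_mul_of_nonneg_left h1 hkpos.le
  rw [Int.floor_eq_iff]
  constructor
  · push_cast
    nlinarith
  · push_cast
    nlinarith

lemma binDigit_eq_one {γ : ℝ} {n k : ℕ} (h1 : 1 - 1 / 2 ^ n ≤ γ) (h2 : γ < 1) (hk : k < n) :
    binDigit γ (k + 1) = 1 := by
  rw [binDigit_succ]
  have hA : ⌊(2 : ℝ) ^ (k + 1) * γ⌋ = 2 ^ (k + 1) - 1 := floor_pow_mul h1 h2 hk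
  have hB : ⌊(2 : ℝ) ^ k * γ⌋ = 2 ^ k - 1 := floor_pow_mul h1 h2 hk.le
  have : (2 : ℝ) * (2 ^ k * γ) = 2 ^ (k + 1) * γ := by ring
  rw [this, hA, hB]
  push_cast [pow_succ]
  ring

/-- The dominating series `c k = (k+1)/2^(k+1)`. -/
noncomputable def cSer (k : ℕ) : ℝ := ((k + 1 : ℕ) : ℝ) / 2 ^ (k + 1)

lemma cSer_eq (k : ℕ) : cSer k = ((k + 1 : ℕ) : ℝ) * (1 / 2 : ℝ) ^ (k + 1) := by
  simp [cSer, div_pow, div_eq_mul_inv, one_div, inv_pow]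

lemma half_norm : ‖(1 / 2 : ℝ)‖ < 1 := by
  rw [Real.norm_eq_abs, abs_lt]; constructor <;> norm_num

lemma summable_base : Summable (fun n : ℕ => (n : ℝ) * (1 / 2 : ℝ) ^ n) := by
  have h := summable_pow_mul_geometric_of_norm_lt_one (R := ℝ) 1 half_norm
  simpa using h

lemma summable_cSer : Summable cSer := by
  exact ((summable_nat_add_iff 1).2 summable_base).congr fun k => (cSer_eq k).symm

lemma tsum_cSer : ∑' k, cSer k = 2 := by
  have h : ∑' n : ℕ, (n : ℝ) * (1 / 2 : ℝ) ^ n = 2 := by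
    rw [tsum_coe_mul_geometric_of_norm_lt_one half_norm]
    norm_num
  have hsum := summable_base
  have h0 : ∑' n : ℕ, (n : ℝ) * (1 / 2 : ℝ) ^ n
      = ((0 : ℕ) : ℝ) * (1 / 2 : ℝ) ^ 0 + ∑' k : ℕ, ((k + 1 : ℕ) : ℝ) * (1 / 2 : ℝ) ^ (k + 1) :=
    Summable.tsum_eq_zero_add hsum
  simp only [Nat.cast_zero, zero_mul, pow_zero, zero_add] at h0
  rw [show (fun k => cSer k) = fun k => ((k + 1 : ℕ) : ℝ) * (1 / 2 : ℝ) ^ (k + 1) from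
    funext cSer_eq, ← h0, h]

/-- The series of `γ`. -/
noncomputable def fSer (γ : ℝ) (k : ℕ) : ℝ :=
  ((k + 1 : ℕ) : ℝ) * (binDigit γ (k + 1) : ℝ) / 2 ^ (k + 1)

lemma fSer_nonneg (γ : ℝ) (k : ℕ) : 0 ≤ fSer γ k := by
  have := binDigit_nonneg γ k
  have h : (0 : ℝ) ≤ (binDigit γ (k + 1) : ℝ) := by exact_mod_cast this
  unfold fSer; positivity

lemma fSer_le (γ : ℝ) (k : ℕ) : fSer γ k ≤ cSer k := by
  have := binDigit_le_one γ k
  have h : (binDigit γ (k + 1) : ℝ) ≤ 1 := by exact_mod_cast this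
  have hnn : (0 : ℝ) ≤ (binDigit γ (k + 1) : ℝ) := by exact_mod_cast binDigit_nonneg γ k
  have h2 : fSer γ k ≤ ((k + 1 : ℕ) : ℝ) * 1 / 2 ^ (k + 1) := by
    unfold fSer; gcongr
  simpa [cSer] using h2

lemma summable_fSer (γ : ℝ) : Summable (fSer γ) :=
  Summable.of_nonneg_of_le (fSer_nonneg γ) (fSer_le γ) summable_cSer

lemma tail_tendsto : Tendsto (fun n => ∑' k, cSer (k + n)) atTop (nhds 0) := by
  have h : ∀ n, ∑' k, cSer (k + n) = (∑' k, cSer k) - ∑ i ∈ Finset.range n, cSer i := by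
    intro n
    have := Summable.sum_add_tsum_nat_add n summable_cSer
    linarith
  simp only [h]
  have := summable_cSer.hasSum.tendsto_sum_nat
  have h2 := (tendsto_const_nhds (x := ∑' k, cSer k)).sub this
  simpa using h2

lemma tendsto_S : Tendsto (fun γ => ∑' k, fSer γ k)
    (nhdsWithin 1 (Set.Ico (1 / 2 : ℝ) 1)) (nhds 2) := by
  rw [Metric.tendsto_nhdsWithin_nhds]
  intro ε hε
  obtain ⟨n, hn⟩ : ∃ n, ∑' k, cSer (k + n) < ε :=
    (tail_tendsto.eventually (gt_mem_nhds hε)).exists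
  refine ⟨1 / 2 ^ n, by positivity, ?_⟩
  intro γ hγ hd
  have hγ1 : γ < 1 := hγ.2
  have hγl : 1 - 1 / 2 ^ n ≤ γ := by
    rw [Real.dist_eq] at hd
    have := abs_lt.1 hd
    linarith [this.1]
  have hle : ∑' k, fSer γ k ≤ 2 := by
    rw [← tsum_cSer]
    exact Summable.tsum_le_tsum (fSer_le γ) (summable_fSer γ) summable_cSer
  have hge : 2 - ∑' k, fSer γ k ≤ ∑' k, cSer (k + n) := by
    have hsub : 2 - ∑' k, fSer γ k = ∑' k, (cSer k - fSer γ k) := by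
      rw [Summable.tsum_sub summable_cSer (summable_fSer γ), tsum_cSer]
    rw [hsub]
    have hsum : Summable (fun k => cSer k - fSer γ k) := summable_cSer.sub (summable_fSer γ)
    rw [← Summable.sum_add_tsum_nat_add n hsum]
    have h0 : ∑ i ∈ Finset.range n, (cSer i - fSer γ i) = 0 := by
      apply Finset.sum_eq_zero
      intro i hi
      have hd1 : binDigit γ (i + 1) = 1 := binDigit_eq_one hγl hγ1 (Finset.mem_range.1 hi)
      simp [cSer, fSer, hd1]
    rw [h0, zero_add]
    refine Summable.tsum_le_tsum (fun k => ?_) ((summable_nat_add_iff n).2 hsum)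
      ((summable_nat_add_iff n).2 summable_cSer)
    have := fSer_nonneg γ (k + n)
    linarith
  rw [Real.dist_eq, abs_sub_comm, abs_of_nonneg (by linarith)]
  linarith

/-- the left limit of `ξ` at `1` (within `[1/2, 1)`) is `0`. -/
theorem xiSteinhaus_left_limit_at_one :
    Tendsto xiSteinhaus (nhdsWithin 1 (Set.Ico (1 / 2 : ℝ) 1)) (nhds 0) := by
  have hlog : Tendsto (fun γ : ℝ => Real.logb 2 γ)
      (nhdsWithin 1 (Set.Ico (1 / 2 : ℝ) 1)) (nhds 0) := by
    have hc : ContinuousAt (fun γ : ℝ => Real.logb 2 γ) 1 := by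
      simp only [Real.logb]
      exact (Real.continuousAt_log one_ne_zero).div_const _
    have h2 : Tendsto (fun γ : ℝ => Real.logb 2 γ)
        (nhdsWithin 1 (Set.Ico (1 / 2 : ℝ) 1)) (nhds (Real.logb 2 1)) :=
      hc.tendsto.mono_left nhdsWithin_le_nhds
    simpa using h2
  have hinv : Tendsto (fun γ : ℝ => 1 / γ)
      (nhdsWithin 1 (Set.Ico (1 / 2 : ℝ) 1)) (nhds 1) := by
    have hc : ContinuousAt (fun γ : ℝ => 1 / γ) 1 :=
      continuousAt_const.div continuousAt_id one_ne_zero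
    have h2 : Tendsto (fun γ : ℝ => 1 / γ)
        (nhdsWithin 1 (Set.Ico (1 / 2 : ℝ) 1)) (nhds (1 / 1 : ℝ)) :=
      hc.tendsto.mono_left nhdsWithin_le_nhds
    simpa using h2
  have hS := tendsto_S
  have hfinal := (tendsto_const_nhds (x := (2 : ℝ))).sub hlog |>.sub (hinv.mul hS)
  have heq : xiSteinhaus = fun γ =>
      2 - Real.logb 2 γ - 1 / γ * ∑' k, fSer γ k := rfl
  rw [heq]
  convert hfinal using 2
  norm_num
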